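/- Let A ∈ R^{n×K} be strictly positive with rows in Δ_K, P symmetric stochastic with eigendecomposition P = QΛQ^T (eigenvalues descending, M distinct eigenvalues λ_{n_s} with multiplicities κ_{n_s}, ŝ the largest index with λ_{n_ŝ} > 0), and â = Q^T log A. Fix i. The sequence W_i^{(r)} of the multiplicative filtering iteration (ε = 0) converges to a unit vector if and only if A fulfills: whenever for some k,l with l ≠ k all quantities c_{l,k}(s) := Σ_{j=n_s}^{n_s+κ_{n_s}−1} q_{ij}(â_{jl} − â_{jk}) vanish for s = 1,...,ŝ, there exist l̃ and s̃ ≤ ŝ with c_{l̃,k}(s̃) > 0 and c_{l̃,k}(s) = 0 for all s < s̃. -/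

import Mathlib

open Matrix Filter

section Aux

private lemma aux_ratio (E : Finset ℝ) (a : ℝ → ℝ) (hb : ∀ ν ∈ E, 0 ≤ 1 + ν)
    (ν₀ : ℝ) (hν₀ : ν₀ ∈ E) (h1 : (1:ℝ) < 1 + ν₀)
    (htop : ∀ ν ∈ E, ν₀ < ν → a ν = 0) :
    Tendsto (fun r : ℕ => (∑ ν ∈ E, a ν * (1 + ν) ^ r) / (1 + ν₀) ^ r) atTop
      (nhds (a ν₀)) := by
  classical
  have hb0 : (0:ℝ) < 1 + ν₀ := lt_trans one_pos h1
  have key : ∀ r : ℕ, (∑ ν ∈ E, a ν * (1 + ν) ^ r) / (1 + ν₀) ^ r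
      = ∑ ν ∈ E, a ν * ((1 + ν) / (1 + ν₀)) ^ r := by
    intro r
    rw [Finset.sum_div]
    exact Finset.sum_congr rfl fun ν _ => by rw [div_pow, mul_div_assoc]
  have hlim : a ν₀ = ∑ ν ∈ E, (if ν = ν₀ then a ν₀ else 0) := by
    rw [Finset.sum_ite_eq' E ν₀ (fun _ => a ν₀)]
    simp [hν₀]
  rw [hlim]
  simp only [key]
  apply tendsto_finset_sum
  intro ν hν
  by_cases hcase : ν = ν₀
  · subst hcase
    simp only [if_pos rfl, div_self hb0.ne']
    simpa using (tendsto_const_nhds : Tendsto (fun _ : ℕ => a ν) atTop _)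
  · simp only [if_neg hcase]
    rcases lt_or_gt_of_ne (fun h : ν = ν₀ => hcase h) with hlt | hgt
    · have h0 : 0 ≤ (1 + ν) / (1 + ν₀) := div_nonneg (hb ν hν) hb0.le
      have h1' : (1 + ν) / (1 + ν₀) < 1 := (div_lt_one hb0).2 (by linarith)
      have := (tendsto_pow_atTop_nhds_zero_of_lt_one h0 h1').const_mul (a ν)
      simpa using this
    · simp [htop ν hν hgt]

private lemma aux_top (E : Finset ℝ) (a : ℝ → ℝ) (hb : ∀ ν ∈ E, 0 ≤ 1 + ν)
    (ν₀ : ℝ) (hν₀ : ν₀ ∈ E) (h1 : (1:ℝ) < 1 + ν₀)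
    (htop : ∀ ν ∈ E, ν₀ < ν → a ν = 0) (hpos : 0 < a ν₀) :
    Tendsto (fun r : ℕ => ∑ ν ∈ E, a ν * (1 + ν) ^ r) atTop atTop := by
  have hpow : Tendsto (fun r : ℕ => (1 + ν₀) ^ r) atTop atTop :=
    tendsto_pow_atTop_atTop_of_one_lt h1
  have h := Tendsto.pos_mul_atTop hpos (aux_ratio E a hb ν₀ hν₀ h1 htop) hpow
  refine h.congr fun r => ?_
  exact div_mul_cancel₀ _ (pow_ne_zero _ (by linarith : (1:ℝ) + ν₀ ≠ 0))

private lemma aux_bot (E : Finset ℝ) (a : ℝ → ℝ) (hb : ∀ ν ∈ E, 0 ≤ 1 + ν)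
    (ν₀ : ℝ) (hν₀ : ν₀ ∈ E) (h1 : (1:ℝ) < 1 + ν₀)
    (htop : ∀ ν ∈ E, ν₀ < ν → a ν = 0) (hneg : a ν₀ < 0) :
    Tendsto (fun r : ℕ => ∑ ν ∈ E, a ν * (1 + ν) ^ r) atTop atBot := by
  have h := aux_top E (fun ν => -a ν) hb ν₀ hν₀ h1
    (fun ν hν hlt => by simp [htop ν hν hlt]) (by show 0 < -a ν₀; linarith)
  rw [← tendsto_neg_atTop_iff]
  refine h.congr fun r => ?_
  rw [← Finset.sum_neg_distrib]
  exact Finset.sum_congr rfl fun ν _ => by ring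

private lemma aux_bdd (E : Finset ℝ) (a : ℝ → ℝ) (hb : ∀ ν ∈ E, 0 ≤ 1 + ν)
    (hz : ∀ ν ∈ E, 0 < ν → a ν = 0) (r : ℕ) :
    |∑ ν ∈ E, a ν * (1 + ν) ^ r| ≤ ∑ ν ∈ E, |a ν| := by
  refine le_trans (Finset.abs_sum_le_sum_abs _ _) (Finset.sum_le_sum fun ν hν => ?_)
  by_cases hpos : 0 < ν
  · simp [hz ν hν hpos]
  · push_neg at hpos
    rw [abs_mul]
    have h01 : 0 ≤ 1 + ν := hb ν hν
    have h11 : 1 + ν ≤ 1 := by linarith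
    have hle : |(1 + ν) ^ r| ≤ 1 := by
      rw [abs_of_nonneg (pow_nonneg h01 r)]
      exact pow_le_one₀ h01 h11
    calc |a ν| * |(1 + ν) ^ r| ≤ |a ν| * 1 :=
          mul_le_mul_of_nonneg_left hle (abs_nonneg _)
      _ = |a ν| := mul_one _

private lemma exists_maximal_of_trans {α : Type*} [Fintype α] [Nonempty α] (r : α → α → Prop)
    (htrans : ∀ a b c, r a b → r b c → r a c) (hirr : ∀ a, ¬ r a a) :
    ∃ a, ∀ b, ¬ r b a := by
  classical
  obtain ⟨a, ha⟩ := Finite.exists_max (fun a => (Finset.univ.filter (fun b => r a b)).card)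
  refine ⟨a, fun b hb => ?_⟩
  have hsub : insert a (Finset.univ.filter (fun x => r a x)) ⊆
      Finset.univ.filter (fun x => r b x) := by
    intro x hx
    rcases Finset.mem_insert.1 hx with rfl | hx
    · exact Finset.mem_filter.2 ⟨Finset.mem_univ _, hb⟩
    · exact Finset.mem_filter.2 ⟨Finset.mem_univ _, htrans _ _ _ hb (Finset.mem_filter.1 hx).2⟩
  have hnot : a ∉ Finset.univ.filter (fun x => r a x) := by simp [hirr a]
  have h1 : (Finset.univ.filter (fun x => r a x)).card + 1 ≤
      (Finset.univ.filter (fun x => r b x)).card := by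
    rw [← Finset.card_insert_of_notMem hnot]
    exact Finset.card_le_card hsub
  have := ha b
  omega

end Aux

/-- Convergence of a row of the multiplicative filtering iterates (ε = 0) to a
unit vector is equivalent to property (PI). Here `P = Q Λ Qᵀ` with `Q`
orthogonal and eigenvalues `lam` in descending order, `â = Qᵀ log A`, and for an
eigenvalue `ν` the quantity `c l k ν` is the group sum
`∑_{j : lam j = ν} q_{ij} (â_{jl} − â_{jk})`. -/
theorem stmt_16 {n K : ℕ} (A : Matrix (Fin n) (Fin K) ℝ)
    (hApos : ∀ i k, 0 < A i k) (hArow : ∀ i, ∑ k, A i k = 1)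
    (P Q : Matrix (Fin n) (Fin n) ℝ) (lam : Fin n → ℝ)
    (hsym : P.IsSymm) (hnonneg : ∀ i j, 0 ≤ P i j) (hrowP : ∀ i, ∑ j, P i j = 1)
    (hQ : Q * Qᵀ = 1) (hQ' : Qᵀ * Q = 1)
    (hdec : ∀ j l : Fin n, j ≤ l → lam l ≤ lam j)
    (hPdec : P = Q * Matrix.diagonal lam * Qᵀ)
    (ahat : Matrix (Fin n) (Fin K) ℝ)
    (hahat : ahat = Qᵀ * (Matrix.of fun i' k' => Real.log (A i' k')))
    (i : Fin n)
    (c : Fin K → Fin K → ℝ → ℝ)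
    (hc : c = fun l k ν =>
      ∑ j ∈ Finset.univ.filter (fun j => lam j = ν), Q i j * (ahat j l - ahat j k))
    (W : ℕ → Matrix (Fin n) (Fin K) ℝ)
    (hW0 : W 0 = A)
    (hWiter : ∀ r i' k,
      W (r + 1) i' k =
        (W r i' k * ∏ j, (W r j k) ^ (P i' j)) /
          (∑ k', W r i' k' * ∏ j, (W r j k') ^ (P i' j))) :
    (∃ k : Fin K, Tendsto (fun r => W r i) atTop
        (nhds (fun k' : Fin K => if k' = k then (1 : ℝ) else 0))) ↔
    (∀ k l : Fin K, l ≠ k →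
      (∀ ν : ℝ, 0 < ν → (∃ j, lam j = ν) → c l k ν = 0) →
      ∃ (lt : Fin K) (νt : ℝ), 0 < νt ∧ (∃ j, lam j = νt) ∧
        0 < c lt k νt ∧
        ∀ ν : ℝ, νt < ν → (∃ j, lam j = ν) → c lt k ν = 0) := by
  classical
  -- `Fin K` is nonempty
  have hK : 0 < K := by
    by_contra h
    push_neg at h
    obtain rfl : K = 0 := Nat.le_zero.1 h
    simpa using hArow i
  haveI : Nonempty (Fin K) := ⟨⟨0, hK⟩⟩
  haveI : Nonempty (Fin n) := ⟨i⟩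
  -- eigenvalue bounds
  have hPQ : P * Q = Q * Matrix.diagonal lam := by
    rw [hPdec, Matrix.mul_assoc (Q * Matrix.diagonal lam) Qᵀ Q, hQ', Matrix.mul_one]
  have hlam : ∀ j, -1 ≤ lam j ∧ lam j ≤ 1 := by
    intro j
    have hQ'jj := congrFun (congrFun hQ' j) j
    have hsum1 : ∑ m, Q m j * Q m j = 1 := by
      simpa [Matrix.mul_apply, Matrix.transpose_apply, Matrix.one_apply] using hQ'jj
    obtain ⟨m0, hm0⟩ := Finite.exists_max (fun m : Fin n => |Q m j|)
    have hvpos : 0 < |Q m0 j| := by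
      by_contra h
      push_neg at h
      have hall : ∀ m, Q m j = 0 := fun m =>
        abs_eq_zero.1 (le_antisymm (le_trans (hm0 m) h) (abs_nonneg _))
      rw [Finset.sum_congr rfl (fun m _ => by rw [hall m, mul_zero])] at hsum1
      simp at hsum1
    have hPv : ∑ t, P m0 t * Q t j = lam j * Q m0 j := by
      have h := congrFun (congrFun hPQ m0) j
      rw [Matrix.mul_apply, Matrix.mul_diagonal] at h
      rw [h, mul_comm]
    have hmul : |lam j| * |Q m0 j| ≤ 1 * |Q m0 j| := by
      rw [one_mul, ← abs_mul]
      calc |lam j * Q m0 j| = |∑ t, P m0 t * Q t j| := by rw [hPv]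
        _ ≤ ∑ t, |P m0 t * Q t j| := Finset.abs_sum_le_sum_abs _ _
        _ ≤ ∑ t, P m0 t * |Q m0 j| := by
            refine Finset.sum_le_sum fun t _ => ?_
            rw [abs_mul, abs_of_nonneg (hnonneg m0 t)]
            exact mul_le_mul_of_nonneg_left (hm0 t) (hnonneg m0 t)
        _ = |Q m0 j| := by rw [← Finset.sum_mul, hrowP m0, one_mul]
    exact abs_le.1 (le_of_mul_le_mul_right hmul hvpos)
  -- closed form of the iteration
  set LA : Matrix (Fin n) (Fin K) ℝ := Matrix.of fun i' k' => Real.log (A i' k') with hLA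
  set M : Matrix (Fin n) (Fin n) ℝ := 1 + P with hM
  set S : ℕ → Fin n → Fin K → ℝ := fun r i' k => (M ^ r * LA) i' k with hS
  have hMdiag : M = Q * Matrix.diagonal (fun j => 1 + lam j) * Qᵀ := by
    have h1 : Matrix.diagonal (fun j : Fin n => (1:ℝ) + lam j)
        = 1 + Matrix.diagonal lam := by
      rw [← Matrix.diagonal_one, Matrix.diagonal_add]
    rw [hM, h1, Matrix.mul_add, Matrix.mul_one, Matrix.add_mul, hQ, ← hPdec]
  have hconj : ∀ d1 d2 : Fin n → ℝ,
      (Q * Matrix.diagonal d1 * Qᵀ) * (Q * Matrix.diagonal d2 * Qᵀ)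
      = Q * Matrix.diagonal (fun j => d1 j * d2 j) * Qᵀ := by
    intro d1 d2
    simp only [Matrix.mul_assoc]
    rw [← Matrix.mul_assoc Qᵀ Q, hQ', Matrix.one_mul, ← Matrix.diagonal_mul_diagonal]
    simp only [Matrix.mul_assoc]
  have hMpow : ∀ r : ℕ, M ^ r = Q * Matrix.diagonal (fun j => (1 + lam j) ^ r) * Qᵀ := by
    intro r
    induction r with
    | zero => simp [Matrix.diagonal_one, hQ]
    | succ r ih =>
      rw [pow_succ, ih, hMdiag, hconj]
      simp [pow_succ]
  have hSform : ∀ (r : ℕ) (i' : Fin n) (k : Fin K),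
      S r i' k = ∑ j, Q i' j * ((1 + lam j) ^ r * ahat j k) := by
    intro r i' k
    have h1 : M ^ r * LA = Q * (Matrix.diagonal (fun j => (1 + lam j) ^ r) * ahat) := by
      rw [hMpow r, Matrix.mul_assoc, Matrix.mul_assoc, ← hahat]
    simp only [hS]
    rw [h1, Matrix.mul_apply]
    exact Finset.sum_congr rfl fun j _ => by rw [Matrix.diagonal_mul]
  have hSrec : ∀ (r : ℕ) (i' : Fin n) (k : Fin K),
      S (r+1) i' k = S r i' k + ∑ j, P i' j * S r j k := by
    intro r i' k
    have h1 : M ^ (r+1) * LA = M ^ r * LA + P * (M ^ r * LA) := by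
      rw [pow_succ', hM, Matrix.add_mul, Matrix.one_mul, Matrix.add_mul, Matrix.mul_assoc]
    simp only [hS]
    rw [h1, Matrix.add_apply]
    simp [Matrix.mul_apply]
  have hT : ∀ (r : ℕ) (i' : Fin n), 0 < ∑ k', Real.exp (S r i' k') :=
    fun r i' => Finset.sum_pos (fun k' _ => Real.exp_pos _) Finset.univ_nonempty
  have hWform : ∀ (r : ℕ) (i' : Fin n) (k : Fin K),
      W r i' k = Real.exp (S r i' k) / ∑ k', Real.exp (S r i' k') := by
    intro r
    induction r with
    | zero =>
      intro i' k
      have hS0 : ∀ (i' : Fin n) (k : Fin K), S 0 i' k = Real.log (A i' k) := by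
        intro i' k
        simp only [hS]
        rw [pow_zero, Matrix.one_mul]
        rfl
      simp only [hS0]
      rw [hW0, Real.exp_log (hApos i' k),
        Finset.sum_congr rfl (fun k' _ => Real.exp_log (hApos i' k')), hArow i', div_one]
    | succ r ih =>
      intro i' k
      have hDpos : ∀ j, (0:ℝ) < ∑ k', Real.exp (S r j k') := fun j => hT r j
      have hWpos' : ∀ j k0, 0 < W r j k0 := fun j k0 => by
        rw [ih j k0]; exact div_pos (Real.exp_pos _) (hDpos j)
      have hlogW : ∀ j k0, Real.log (W r j k0)
          = S r j k0 - Real.log (∑ k', Real.exp (S r j k')) := by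
        intro j k0
        rw [ih j k0, Real.log_div (Real.exp_ne_zero _) (hDpos j).ne', Real.log_exp]
      have hprod : ∀ k0 : Fin K, ∏ j, (W r j k0) ^ (P i' j)
          = Real.exp (∑ j, (S r j k0 - Real.log (∑ k', Real.exp (S r j k'))) * P i' j) := by
        intro k0
        rw [Real.exp_sum]
        refine Finset.prod_congr rfl fun j _ => ?_
        rw [Real.rpow_def_of_pos (hWpos' j k0), hlogW j k0]
      have hnum : ∀ k0 : Fin K, W r i' k0 * ∏ j, (W r j k0) ^ (P i' j)
          = Real.exp (S (r+1) i' k0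
              + (- ∑ j, Real.log (∑ k', Real.exp (S r j k')) * P i' j))
            / ∑ k', Real.exp (S r i' k') := by
        intro k0
        rw [ih i' k0, hprod k0, div_mul_eq_mul_div, ← Real.exp_add]
        congr 2
        rw [hSrec r i' k0]
        have hsplit2 : ∑ j, (S r j k0 - Real.log (∑ k', Real.exp (S r j k'))) * P i' j
            = (∑ j, P i' j * S r j k0)
              - ∑ j, Real.log (∑ k', Real.exp (S r j k')) * P i' j := by
          rw [← Finset.sum_sub_distrib]
          exact Finset.sum_congr rfl fun j _ => by ring
        rw [hsplit2]; ring
      rw [hWiter r i' k]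
      simp only [hnum]
      have hsum : ∑ k', Real.exp (S (r+1) i' k'
            + (- ∑ j, Real.log (∑ k'', Real.exp (S r j k'')) * P i' j))
            / ∑ k'', Real.exp (S r i' k'')
          = ((∑ k', Real.exp (S (r+1) i' k'))
              * Real.exp (- ∑ j, Real.log (∑ k'', Real.exp (S r j k'')) * P i' j))
            / ∑ k'', Real.exp (S r i' k'') := by
        rw [← Finset.sum_div, Finset.sum_mul]
        congr 1
        exact Finset.sum_congr rfl fun k' _ => by rw [Real.exp_add]
      rw [hsum, Real.exp_add]
      have h1 := (hT r i').ne'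
      have h2 := (hT (r+1) i').ne'
      have h3 := Real.exp_ne_zero (- ∑ j, Real.log (∑ k'', Real.exp (S r j k'')) * P i' j)
      field_simp
  have hWpos : ∀ (r : ℕ) (i' : Fin n) (k : Fin K), 0 < W r i' k := fun r i' k => by
    rw [hWform r i' k]; exact div_pos (Real.exp_pos _) (hT r i')
  have hWsum : ∀ (r : ℕ) (i' : Fin n), ∑ k, W r i' k = 1 := fun r i' => by
    rw [Finset.sum_congr rfl fun k _ => hWform r i' k, ← Finset.sum_div,
      div_self (hT r i').ne']
  have hratio : ∀ (r : ℕ) (l k : Fin K),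
      W r i l = Real.exp (S r i l - S r i k) * W r i k := by
    intro r l k
    rw [hWform, hWform, Real.exp_sub]
    rw [div_mul_div_comm, mul_comm (Real.exp (S r i k)), mul_div_mul_right _ _ (Real.exp_ne_zero _)]
  -- grouping by eigenvalues
  set Eig : Finset ℝ := Finset.image lam Finset.univ with hEig
  have hmemE : ∀ ν : ℝ, ν ∈ Eig ↔ ∃ j, lam j = ν := by
    intro ν
    rw [hEig, Finset.mem_image]
    simp
  have hbE : ∀ ν ∈ Eig, (0:ℝ) ≤ 1 + ν := by
    intro ν hν
    obtain ⟨j, rfl⟩ := (hmemE ν).1 hν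
    linarith [(hlam j).1]
  have hdsum : ∀ (l k : Fin K) (r : ℕ),
      S r i l - S r i k = ∑ ν ∈ Eig, c l k ν * (1 + ν) ^ r := by
    intro l k r
    rw [hSform r i l, hSform r i k, ← Finset.sum_sub_distrib]
    have hterm : ∀ j : Fin n,
        Q i j * ((1 + lam j) ^ r * ahat j l) - Q i j * ((1 + lam j) ^ r * ahat j k)
        = (Q i j * (ahat j l - ahat j k)) * (1 + lam j) ^ r := fun j => by ring
    rw [Finset.sum_congr rfl (fun j _ => hterm j)]
    rw [← Finset.sum_fiberwise_of_maps_to (fun j _ => (hmemE (lam j)).2 ⟨j, rfl⟩)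
      (fun j => (Q i j * (ahat j l - ahat j k)) * (1 + lam j) ^ r)]
    refine Finset.sum_congr rfl fun ν hν => ?_
    simp only [hc]
    rw [Finset.sum_mul]
    refine Finset.sum_congr rfl fun j hj => ?_
    rw [(Finset.mem_filter.1 hj).2]
  -- analytic consequences
  have hAtTop : ∀ (l k : Fin K) (νt : ℝ), 0 < νt → νt ∈ Eig → 0 < c l k νt →
      (∀ ν ∈ Eig, νt < ν → c l k ν = 0) →
      Tendsto (fun r => S r i l - S r i k) atTop atTop := by
    intro l k νt hpos hmem hcpos htopz
    have h := aux_top Eig (c l k) hbE νt hmem (by linarith) htopz hcpos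
    exact h.congr fun r => (hdsum l k r).symm
  have hAtBot : ∀ (l k : Fin K) (νt : ℝ), 0 < νt → νt ∈ Eig → c l k νt < 0 →
      (∀ ν ∈ Eig, νt < ν → c l k ν = 0) →
      Tendsto (fun r => S r i l - S r i k) atTop atBot := by
    intro l k νt hpos hmem hcneg htopz
    have h := aux_bot Eig (c l k) hbE νt hmem (by linarith) htopz hcneg
    exact h.congr fun r => (hdsum l k r).symm
  have hBdd : ∀ (l k : Fin K), (∀ ν ∈ Eig, 0 < ν → c l k ν = 0) →
      ∀ r, |S r i l - S r i k| ≤ ∑ ν ∈ Eig, |c l k ν| := by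
    intro l k hz r
    rw [hdsum l k r]
    exact aux_bdd Eig (c l k) hbE hz r
  have hsplit : ∀ l k : Fin K,
      (∀ ν ∈ Eig, 0 < ν → c l k ν = 0) ∨
      (∃ ν₀ ∈ Eig, 0 < ν₀ ∧ c l k ν₀ ≠ 0 ∧ ∀ ν ∈ Eig, ν₀ < ν → c l k ν = 0) := by
    intro l k
    rcases (Eig.filter (fun ν => 0 < ν ∧ c l k ν ≠ 0)).eq_empty_or_nonempty with hFe | hFne
    · left
      intro ν hν hν0
      by_contra h
      have hmem : ν ∈ Eig.filter (fun ν => 0 < ν ∧ c l k ν ≠ 0) :=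
        Finset.mem_filter.2 ⟨hν, hν0, h⟩
      rw [hFe] at hmem
      simp at hmem
    · right
      have hmem := Finset.mem_filter.1
        ((Eig.filter (fun ν => 0 < ν ∧ c l k ν ≠ 0)).max'_mem hFne)
      refine ⟨_, hmem.1, hmem.2.1, hmem.2.2, fun ν hν hlt => ?_⟩
      by_contra h
      have h0 : 0 < ν := lt_trans hmem.2.1 hlt
      exact absurd (Finset.le_max' _ ν (Finset.mem_filter.2 ⟨hν, h0, h⟩)) (not_le.2 hlt)
  constructor
  · -- forward direction
    rintro ⟨k0, hk0⟩ k l hlk hzero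
    have hcomp := tendsto_pi_nhds.1 hk0
    have hzE : ∀ ν ∈ Eig, 0 < ν → c l k ν = 0 :=
      fun ν hν h0 => hzero ν h0 ((hmemE ν).1 hν)
    have hdb : ∀ k' : Fin K, k' ≠ k0 →
        Tendsto (fun r => S r i k' - S r i k0) atTop atBot := by
      intro k' hk'
      have h0 : Tendsto (fun r => W r i k') atTop (nhds 0) := by
        have h := hcomp k'
        rwa [if_neg hk'] at h
      have h1 : Tendsto (fun r => W r i k0) atTop (nhds 1) := by
        have h := hcomp k0
        rwa [if_pos rfl] at h
      have hdiv : Tendsto (fun r => Real.exp (S r i k' - S r i k0)) atTop (nhds 0) := by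
        have h2 := h0.div h1 one_ne_zero
        norm_num at h2
        refine h2.congr fun r => ?_
        simp only [Pi.div_apply]
        rw [hratio r k' k0, mul_div_assoc, div_self (hWpos r i k0).ne', mul_one]
      exact Real.tendsto_exp_comp_nhds_zero.1 hdiv
    by_cases hk : k = k0
    · exfalso
      subst hk
      have hb := hdb l hlk
      have hbd := hBdd l k hzE
      obtain ⟨r, hr⟩ :=
        (hb.eventually (eventually_lt_atBot (-(∑ ν ∈ Eig, |c l k ν|) - 1))).exists
      have h2 := (abs_le.1 (hbd r)).1
      linarith
    · have hd0 := hdb k hk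
      have hdt : Tendsto (fun r => S r i k0 - S r i k) atTop atTop := by
        have h := tendsto_neg_atTop_iff.2 hd0
        exact h.congr fun r => by ring
      rcases hsplit k0 k with hzz | ⟨ν₀, hmem, hν0, hcne, htopz⟩
      · exfalso
        have hbd := hBdd k0 k hzz
        obtain ⟨r, hr⟩ :=
          (hdt.eventually (eventually_gt_atTop (∑ ν ∈ Eig, |c k0 k ν|))).exists
        have h2 := (abs_le.1 (hbd r)).2
        linarith
      · have hcpos : 0 < c k0 k ν₀ := by
          rcases hcne.lt_or_gt with hneg | hpos
          · exfalso
            have hbot := hAtBot k0 k ν₀ hν0 hmem hneg htopz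
            obtain ⟨r, hr⟩ := ((hdt.eventually (eventually_gt_atTop 0)).and
              (hbot.eventually (eventually_lt_atBot 0))).exists
            linarith [hr.1, hr.2]
          · exact hpos
        exact ⟨k0, ν₀, hν0, (hmemE ν₀).1 hmem, hcpos,
          fun ν hlt hex => htopz ν ((hmemE ν).2 hex) hlt⟩
  · -- backward direction
    intro hPI
    have htrans : ∀ a b d : Fin K,
        Tendsto (fun r => S r i a - S r i b) atTop atTop →
        Tendsto (fun r => S r i b - S r i d) atTop atTop →
        Tendsto (fun r => S r i a - S r i d) atTop atTop := by
      intro a b d hab hbd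
      have h := Filter.Tendsto.atTop_add_atTop hab hbd
      exact h.congr fun r => by ring
    have hirr : ∀ a : Fin K, ¬ Tendsto (fun r => S r i a - S r i a) atTop atTop := by
      intro a h
      obtain ⟨r, hr⟩ := (h.eventually (eventually_gt_atTop 0)).exists
      simp at hr
    obtain ⟨k0, hmax⟩ := exists_maximal_of_trans
      (fun l k => Tendsto (fun r => S r i l - S r i k) atTop atTop) htrans hirr
    have hto0 : ∀ l, l ≠ k0 → Tendsto (fun r => W r i l) atTop (nhds 0) := by
      intro l hl
      have hdbot : Tendsto (fun r => S r i l - S r i k0) atTop atBot := by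
        rcases hsplit l k0 with hzz | ⟨ν₀, hmem, hν0, hcne, htopz⟩
        · exfalso
          have hante : ∀ ν : ℝ, 0 < ν → (∃ j, lam j = ν) → c l k0 ν = 0 :=
            fun ν h0 hex => hzz ν ((hmemE ν).2 hex) h0
          obtain ⟨lt, νt, hνt, hex, hcpos, hhigh⟩ := hPI k0 l hl hante
          exact hmax lt (hAtTop lt k0 νt hνt ((hmemE νt).2 hex) hcpos
            (fun ν hν hlt' => hhigh ν hlt' ((hmemE ν).1 hν)))
        · rcases hcne.lt_or_gt with hneg | hpos
          · exact hAtBot l k0 ν₀ hν0 hmem hneg htopz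
          · exact absurd (hAtTop l k0 ν₀ hν0 hmem hpos htopz) (hmax l)
      have hub : ∀ r, W r i l ≤ Real.exp (S r i l - S r i k0) := by
        intro r
        rw [hWform r i l, Real.exp_sub]
        apply div_le_div_of_nonneg_left (Real.exp_pos _).le (Real.exp_pos _)
        exact Finset.single_le_sum (fun k' _ => (Real.exp_pos (S r i k')).le)
          (Finset.mem_univ k0)
      exact squeeze_zero (fun r => (hWpos r i l).le) hub
        (Real.tendsto_exp_atBot.comp hdbot)
    refine ⟨k0, tendsto_pi_nhds.2 fun x => ?_⟩
    by_cases hx : x = k0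
    · subst hx
      rw [if_pos rfl]
      have hsum0 : Tendsto (fun r => ∑ l ∈ Finset.univ.erase x, W r i l) atTop (nhds 0) := by
        have h := tendsto_finset_sum (Finset.univ.erase x)
          (fun l hl => hto0 l (Finset.ne_of_mem_erase hl))
        simpa using h
      have heq : ∀ r : ℕ, W r i x = 1 - ∑ l ∈ Finset.univ.erase x, W r i l := by
        intro r
        have h := hWsum r i
        rw [← Finset.add_sum_erase Finset.univ (fun k => W r i k) (Finset.mem_univ x)] at h
        linarith
      have hlim := (tendsto_const_nhds (x := (1:ℝ)) (f := atTop)).sub hsum0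
      rw [sub_zero] at hlim
      exact hlim.congr fun r => (heq r).symm
    · rw [if_neg hx]
      exact hto0 x hx
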